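/- Let A ∈ ℝ^{n×n}, B ∈ ℝ^{n×m}, let C ∈ ℝ^{n×n} be invertible, and let ε ≥ 0. Suppose r̄_{k+1} = A r̄_k + B ū_k for k = 0,…,K−1 and y_k = C r̄_k + e_k with ‖e_k‖₂ ≤ ε for k = 0,…,K, and suppose the sequences (r*_k)_{k=0}^K, (u*_k)_{k=0}^{K−1} satisfy r*_{k+1} = A r*_k + B u*_k for k = 0,…,K−1 and ‖y_k − C r*_k‖₂ ≤ ε for k = 0,…,K. Then for every k = 0,…,K−1, ‖B(u*_k − ū_k)‖₂ ≤ 2 C₀ ε, where C₀ = (1/√σ_min(CᵀC))·(1 + √(σ_max(CᵀC)·σ_max(AᵀA)/σ_min(CᵀC))). -/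

import Mathlib

open Matrix Finset

noncomputable def l2norm {k : ℕ} (x : Fin k → ℝ) : ℝ := Real.sqrt (∑ i, (x i) ^ 2)

def l1norm {k : ℕ} (x : Fin k → ℝ) : ℝ := ∑ i, |x i|

def Sparse {k : ℕ} (s : ℕ) (x : Fin k → ℝ) : Prop :=
  (Finset.univ.filter fun i => x i ≠ 0).card ≤ s

def RIP {n m : ℕ} (s : ℕ) (δ : ℝ) (Φ : Matrix (Fin n) (Fin m) ℝ) : Prop :=
  ∀ c : Fin m → ℝ, Sparse s c →
    (1 - δ) * (l2norm c) ^ 2 ≤ (l2norm (Φ.mulVec c)) ^ 2 ∧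
    (l2norm (Φ.mulVec c)) ^ 2 ≤ (1 + δ) * (l2norm c) ^ 2

noncomputable def sigmaMin {k : ℕ} (M : Matrix (Fin k) (Fin k) ℝ) (hM : M.IsHermitian) : ℝ :=
  ⨅ i, hM.eigenvalues i

noncomputable def sigmaMax {k : ℕ} (M : Matrix (Fin k) (Fin k) ℝ) (hM : M.IsHermitian) : ℝ :=
  ⨆ i, hM.eigenvalues i

lemma rayleigh_bounds {k : ℕ} (M : Matrix (Fin k) (Fin k) ℝ) (hM : M.IsHermitian) (x : Fin k → ℝ) :
    sigmaMin M hM * (x ⬝ᵥ x) ≤ x ⬝ᵥ M.mulVec x ∧ x ⬝ᵥ M.mulVec x ≤ sigmaMax M hM * (x ⬝ᵥ x) := by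
  classical
  set U : Matrix (Fin k) (Fin k) ℝ := (hM.eigenvectorUnitary : Matrix (Fin k) (Fin k) ℝ) with hUdef
  have hU : U * star U = 1 := (Matrix.mem_unitaryGroup_iff).mp hM.eigenvectorUnitary.2
  set z : Fin k → ℝ := (star U) *ᵥ x with hz
  have hstarT : star U = Uᵀ := by
    ext i j; simp [Matrix.star_eq_conjTranspose, Matrix.conjTranspose_apply]
  have hx_back : U *ᵥ z = x := by
    rw [hz, mulVec_mulVec, hU, one_mulVec]
  have hdot : x ⬝ᵥ M *ᵥ x = ∑ i, hM.eigenvalues i * z i ^ 2 := by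
    conv_lhs => rw [hM.spectral_theorem, Unitary.conjStarAlgAut_apply]
    rw [← Matrix.mulVec_mulVec, ← Matrix.mulVec_mulVec, Matrix.dotProduct_mulVec,
      ← Matrix.mulVec_transpose, ← hstarT, ← hz]
    simp only [dotProduct, Matrix.mulVec_diagonal]
    exact Finset.sum_congr rfl fun i _ => by
      simp [sq]; ring
  have hzz : x ⬝ᵥ x = ∑ i, z i ^ 2 := by
    have h1 : z ⬝ᵥ z = x ⬝ᵥ x := by
      rw [hz]
      nth_rewrite 1 [Matrix.dotProduct_mulVec]
      rw [← Matrix.mulVec_transpose]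
      rw [show (star U)ᵀ = U by rw [hstarT, Matrix.transpose_transpose]]
      rw [← hz, hx_back]
    rw [← h1]
    simp [dotProduct, sq]
  have hmin : ∀ i, sigmaMin M hM ≤ hM.eigenvalues i := fun i =>
    ciInf_le (Set.Finite.bddBelow (Set.finite_range _)) i
  have hmax : ∀ i, hM.eigenvalues i ≤ sigmaMax M hM := fun i =>
    le_ciSup (Set.Finite.bddAbove (Set.finite_range _)) i
  constructor
  · rw [hdot, hzz, Finset.mul_sum]
    exact Finset.sum_le_sum fun i _ => mul_le_mul_of_nonneg_right (hmin i) (sq_nonneg _)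
  · rw [hdot, hzz, Finset.mul_sum]
    exact Finset.sum_le_sum fun i _ => mul_le_mul_of_nonneg_right (hmax i) (sq_nonneg _)

lemma l2norm_nonneg {k : ℕ} (x : Fin k → ℝ) : 0 ≤ l2norm x := Real.sqrt_nonneg _

lemma l2norm_eq_sqrt_dot {k : ℕ} (x : Fin k → ℝ) : l2norm x = Real.sqrt (x ⬝ᵥ x) := by
  simp [l2norm, dotProduct, sq]

lemma l2norm_eq_norm {k : ℕ} (x : Fin k → ℝ) :
    l2norm x = ‖(WithLp.equiv 2 (Fin k → ℝ)).symm x‖ := by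
  rw [EuclideanSpace.norm_eq]
  simp [l2norm, Real.norm_eq_abs, sq_abs]

lemma l2norm_add_le {k : ℕ} (a b : Fin k → ℝ) : l2norm (a + b) ≤ l2norm a + l2norm b := by
  simp only [l2norm_eq_norm]
  rw [show (WithLp.equiv 2 (Fin k → ℝ)).symm (a + b)
      = (WithLp.equiv 2 (Fin k → ℝ)).symm a + (WithLp.equiv 2 (Fin k → ℝ)).symm b from rfl]
  exact norm_add_le _ _

lemma l2norm_neg {k : ℕ} (a : Fin k → ℝ) : l2norm (-a) = l2norm a := by
  simp [l2norm]
/-- bound on ‖B(u*ₖ − ūₖ)‖₂ in terms of the network matrices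
(equation (13)/(14) of the paper). -/
theorem stmt3 {n m K : ℕ}
    (A : Matrix (Fin n) (Fin n) ℝ) (B : Matrix (Fin n) (Fin m) ℝ)
    (C : Matrix (Fin n) (Fin n) ℝ) (hC : IsUnit C)
    (hHC : (Cᵀ * C).IsHermitian) (hHA : (Aᵀ * A).IsHermitian)
    (ε : ℝ) (hε : 0 ≤ ε)
    (y rbar : Fin (K + 1) → Fin n → ℝ) (ubar : Fin K → Fin m → ℝ)
    (e : Fin (K + 1) → Fin n → ℝ)
    (hdynbar : ∀ k : Fin K, rbar k.succ = A.mulVec (rbar k.castSucc) + B.mulVec (ubar k))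
    (houtbar : ∀ k, y k = C.mulVec (rbar k) + e k)
    (he : ∀ k, l2norm (e k) ≤ ε)
    (rstar : Fin (K + 1) → Fin n → ℝ) (ustar : Fin K → Fin m → ℝ)
    (hdynstar : ∀ k : Fin K, rstar k.succ = A.mulVec (rstar k.castSucc) + B.mulVec (ustar k))
    (houtstar : ∀ k, l2norm (y k - C.mulVec (rstar k)) ≤ ε) :
    ∀ k : Fin K,
      l2norm (B.mulVec (ustar k - ubar k)) ≤
        2 * ((1 / Real.sqrt (sigmaMin (Cᵀ * C) hHC)) *
          (1 + Real.sqrt (sigmaMax (Cᵀ * C) hHC * sigmaMax (Aᵀ * A) hHA /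
            sigmaMin (Cᵀ * C) hHC))) * ε := by
  intro k
  rcases isEmpty_or_nonempty (Fin n) with hn | hn
  · have h1 : l2norm (B.mulVec (ustar k - ubar k)) = 0 := by simp [l2norm]
    have h2 : sigmaMin (Cᵀ * C) hHC = 0 := Real.iInf_of_isEmpty _
    rw [h1, h2]
    simp
  · set σm := sigmaMin (Cᵀ * C) hHC with hσm
    set σC := sigmaMax (Cᵀ * C) hHC with hσC
    set σA := sigmaMax (Aᵀ * A) hHA with hσA
    have hCpos : (Cᵀ * C).PosDef := by
      refine Matrix.PosDef.of_dotProduct_mulVec_pos hHC fun x hx => ?_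
      have hinj : Function.Injective C.mulVec := mulVec_injective_iff_isUnit.mpr hC
      have hCx : C *ᵥ x ≠ 0 := fun h => hx (hinj (by simpa using h))
      have hsx : star x = x := by simp
      rw [hsx, ← Matrix.mulVec_mulVec, Matrix.dotProduct_mulVec, Matrix.vecMul_transpose]
      have h0 : (0:ℝ) ≤ (C *ᵥ x) ⬝ᵥ (C *ᵥ x) :=
        Finset.sum_nonneg fun i _ => mul_self_nonneg _
      rcases eq_or_lt_of_le h0 with h | h
      · exact absurd (dotProduct_self_eq_zero.mp h.symm) hCx
      · exact h
    have heig : ∀ i, 0 < hHC.eigenvalues i := hCpos.eigenvalues_pos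
    have hσm_pos : 0 < σm := by
      have hmem : σm ∈ Set.range hHC.eigenvalues := by
        rw [hσm]
        exact (Set.range_nonempty _).csInf_mem (Set.finite_range _)
      obtain ⟨i, hi⟩ := hmem
      rw [← hi]; exact heig i
    have hsqm_pos : 0 < Real.sqrt σm := Real.sqrt_pos.mpr hσm_pos
    have i0 : Fin n := Classical.arbitrary _
    have hmle : σm ≤ σC :=
      le_trans (ciInf_le (Set.Finite.bddBelow (Set.finite_range _)) i0)
        (le_ciSup (Set.Finite.bddAbove (Set.finite_range _)) i0)
    have hσA0 : 0 ≤ σA := by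
      have h1 : 0 ≤ hHA.eigenvalues i0 := by
        have := Matrix.posSemidef_conjTranspose_mul_self A
        rw [show Aᴴ = Aᵀ from rfl] at this
        exact this.eigenvalues_nonneg i0
      exact le_trans h1 (le_ciSup (Set.Finite.bddAbove (Set.finite_range _)) i0)
    have hClow : ∀ x : Fin n → ℝ, Real.sqrt σm * l2norm x ≤ l2norm (C *ᵥ x) := by
      intro x
      have h1 := (rayleigh_bounds _ hHC x).1
      rw [← Matrix.mulVec_mulVec, Matrix.dotProduct_mulVec, Matrix.vecMul_transpose] at h1
      have h2 := Real.sqrt_le_sqrt h1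
      rwa [Real.sqrt_mul hσm_pos.le, ← l2norm_eq_sqrt_dot, ← l2norm_eq_sqrt_dot] at h2
    have hAup : ∀ x : Fin n → ℝ, l2norm (A *ᵥ x) ≤ Real.sqrt σA * l2norm x := by
      intro x
      have h1 := (rayleigh_bounds _ hHA x).2
      rw [← Matrix.mulVec_mulVec, Matrix.dotProduct_mulVec, Matrix.vecMul_transpose] at h1
      have h2 := Real.sqrt_le_sqrt h1
      rwa [Real.sqrt_mul hσA0, ← l2norm_eq_sqrt_dot, ← l2norm_eq_sqrt_dot] at h2
    have hCd : ∀ j, l2norm (C *ᵥ (rstar j - rbar j)) ≤ 2 * ε := by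
      intro j
      have key : C *ᵥ (rstar j - rbar j) = -(y j - C *ᵥ rstar j) + e j := by
        rw [Matrix.mulVec_sub, houtbar j]; abel
      calc l2norm (C *ᵥ (rstar j - rbar j))
          = l2norm (-(y j - C *ᵥ rstar j) + e j) := by rw [key]
        _ ≤ l2norm (-(y j - C *ᵥ rstar j)) + l2norm (e j) := l2norm_add_le _ _
        _ = l2norm (y j - C *ᵥ rstar j) + l2norm (e j) := by rw [l2norm_neg]
        _ ≤ ε + ε := add_le_add (houtstar j) (he j)
        _ = 2 * ε := by ring
    have hdb : ∀ j, l2norm (rstar j - rbar j) ≤ 2 * ε / Real.sqrt σm := by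
      intro j
      rw [le_div_iff₀ hsqm_pos, mul_comm]
      exact le_trans (hClow _) (hCd j)
    have hBu : B *ᵥ (ustar k - ubar k)
        = (rstar k.succ - rbar k.succ) + -(A *ᵥ (rstar k.castSucc - rbar k.castSucc)) := by
      rw [Matrix.mulVec_sub, Matrix.mulVec_sub, hdynstar k, hdynbar k]
      abel
    have hX : Real.sqrt σA ≤ Real.sqrt (σC * σA / σm) := by
      apply Real.sqrt_le_sqrt
      rw [le_div_iff₀ hσm_pos]
      calc σA * σm ≤ σA * σC := mul_le_mul_of_nonneg_left hmle hσA0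
        _ = σC * σA := mul_comm _ _
    have hfac : (0:ℝ) ≤ 2 * ε / Real.sqrt σm := by positivity
    calc l2norm (B *ᵥ (ustar k - ubar k))
        = l2norm ((rstar k.succ - rbar k.succ)
            + -(A *ᵥ (rstar k.castSucc - rbar k.castSucc))) := by rw [hBu]
      _ ≤ l2norm (rstar k.succ - rbar k.succ)
            + l2norm (-(A *ᵥ (rstar k.castSucc - rbar k.castSucc))) := l2norm_add_le _ _
      _ = l2norm (rstar k.succ - rbar k.succ)
            + l2norm (A *ᵥ (rstar k.castSucc - rbar k.castSucc)) := by rw [l2norm_neg]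
      _ ≤ 2 * ε / Real.sqrt σm + Real.sqrt σA * (2 * ε / Real.sqrt σm) :=
          add_le_add (hdb _) (le_trans (hAup _)
            (mul_le_mul_of_nonneg_left (hdb _) (Real.sqrt_nonneg _)))
      _ = (2 * ε / Real.sqrt σm) * (1 + Real.sqrt σA) := by ring
      _ ≤ (2 * ε / Real.sqrt σm) * (1 + Real.sqrt (σC * σA / σm)) :=
          mul_le_mul_of_nonneg_left (add_le_add_right hX 1) hfac
      _ = 2 * ((1 / Real.sqrt σm) * (1 + Real.sqrt (σC * σA / σm))) * ε := by ring
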